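/- Let Λ_0, Λ_1, Λ_2, … be a sequence of complex numbers, and let A, σ, V and U be as defined in the context. Then for all integers k ≥ j ≥ 0 one has ∑_{l=j}^{k} U(k,l)·V(l,j) = δ_{k,j} and ∑_{l=j}^{k} V(k,l)·U(l,j) = δ_{k,j}, where δ_{k,j} is Kronecker's delta (equal to 1 if k = j and 0 otherwise). -/

import Mathlib

/-- The shifted double sequence `besselA' (j+1) (m+1) = A(j, m)`, where
`A(-1,0) = 1`, `A(-1,m) = 0` for `m ≥ 1`, `A(j,-1) = 0` for `j ≥ 0`, and
`A(j,m) = j·A(j,m-1) + A(j-1,m)` for `j, m ≥ 0`. -/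
def besselA' : ℕ → ℕ → ℤ
  | 0, 0 => 0
  | 0, 1 => 1
  | 0, _ + 2 => 0
  | _ + 1, 0 => 0
  | j + 1, m + 1 => (j : ℤ) * besselA' (j + 1) m + besselA' j (m + 1)
termination_by j m => (j, m)

/-- `besselA j m = A(j, m)` for `j, m ≥ 0`. -/
def besselA (j m : ℕ) : ℤ := besselA' (j + 1) (m + 1)

/-- `sigmaE Λ k m = σ_{k-1,m}`, the elementary symmetric polynomial of degree `m`
in `Λ_0, …, Λ_{k-1}`. -/
noncomputable def sigmaE (Λ : ℕ → ℂ) (k m : ℕ) : ℂ :=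
  ∑ t ∈ Finset.powersetCard m (Finset.range k), ∏ i ∈ t, Λ i

/-- `Vcoef Λ k j = V(k,j) = ∑_{m=0}^{k-j} A(j, k-j-m)·σ_{k-1,m}` for `0 ≤ j ≤ k`,
and `V(k,j) = 0` for `j > k` or `j < 0`. -/
noncomputable def Vcoef (Λ : ℕ → ℂ) (k : ℕ) (j : ℤ) : ℂ :=
  if j < 0 ∨ (k : ℤ) < j then 0
  else ∑ m ∈ Finset.range (k - j.toNat + 1),
    (besselA j.toNat (k - j.toNat - m) : ℂ) * sigmaE Λ k m

/-- The shifted double sequence `Ucoef' Λ (k+1) (j+1) = U(k,j)`, where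
`U(-1,-1) = 1`, `U(k,-1) = U(-1,j) = 0` for `k, j ≥ 0`, and
`U(k,j) = -(Λ_j + k - 1)·U(k-1,j) + U(k-1,j-1)` for `k, j ≥ 0`. -/
noncomputable def Ucoef' (Λ : ℕ → ℂ) : ℕ → ℕ → ℂ
  | 0, 0 => 1
  | 0, _ + 1 => 0
  | _ + 1, 0 => 0
  | k + 1, j + 1 => -(Λ j + (k : ℂ) - 1) * Ucoef' Λ k (j + 1) + Ucoef' Λ k j

/-- `Ucoef Λ k j = U(k,j)` for `k, j ≥ 0`. -/
noncomputable def Ucoef (Λ : ℕ → ℂ) (k j : ℕ) : ℂ := Ucoef' Λ (k + 1) (j + 1)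

open Finset

lemma besselA'_one (j : ℕ) : besselA' j 1 = 1 := by
  induction j with
  | zero => simp [besselA']
  | succ j ih => rw [besselA']; simp [besselA', ih]

lemma besselA_zero_right (j : ℕ) : besselA j 0 = 1 := by
  simpa [besselA] using besselA'_one (j+1)

lemma besselA_zero_left (m : ℕ) : besselA 0 m = if m = 0 then 1 else 0 := by
  rw [besselA, besselA']
  match m with
  | 0 => simp [besselA']
  | m + 1 => simp [besselA']

lemma besselA_succ (j m : ℕ) :
    besselA (j+1) (m+1) = (j+1) * besselA (j+1) m + besselA j (m+1) := by
  rw [besselA, besselA']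
  push_cast
  rfl

lemma sigmaE_zero (Λ : ℕ → ℂ) (k : ℕ) : sigmaE Λ k 0 = 1 := by
  simp [sigmaE]

lemma sigmaE_eq_zero (Λ : ℕ → ℂ) {k m : ℕ} (h : k < m) : sigmaE Λ k m = 0 := by
  rw [sigmaE, powersetCard_eq_empty.2 (by simpa using h)]
  simp

lemma sigmaE_succ (Λ : ℕ → ℂ) (k m : ℕ) :
    sigmaE Λ (k+1) (m+1) = sigmaE Λ k (m+1) + Λ k * sigmaE Λ k m := by
  have hk : k ∉ range k := by simp
  rw [sigmaE, range_add_one, powersetCard_succ_insert hk, sum_union, sigmaE, sigmaE,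
    sum_image, mul_sum]
  · congr 1
    refine sum_congr rfl fun t ht => ?_
    have : k ∉ t := fun hkt => hk ((mem_powersetCard.1 ht).1 hkt)
    rw [prod_insert this]
  · intro t ht t' ht' h
    have h1 : k ∉ t := fun hkt => hk ((mem_powersetCard.1 (by simpa using ht)).1 hkt)
    have h2 : k ∉ t' := fun hkt => hk ((mem_powersetCard.1 (by simpa using ht')).1 hkt)
    have := congrArg (Finset.erase · k) h
    simpa [erase_insert, h1, h2] using this
  · rw [disjoint_left]
    intro s hs hs'
    have h1 : k ∉ s := fun hkt => hk ((mem_powersetCard.1 hs).1 hkt)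
    obtain ⟨t, ht, rfl⟩ := mem_image.1 hs'
    exact h1 (mem_insert_self _ _)

noncomputable def Vn (Λ : ℕ → ℂ) (k j : ℕ) : ℂ :=
  if k < j then 0
  else ∑ m ∈ Finset.range (k - j + 1), (besselA j (k - j - m) : ℂ) * sigmaE Λ k m

lemma Vcoef_natCast (Λ : ℕ → ℂ) (k j : ℕ) : Vcoef Λ k (j : ℤ) = Vn Λ k j := by
  simp [Vcoef, Vn, show ¬((j:ℤ) < 0) from by omega]

lemma Vn_eq_zero (Λ : ℕ → ℂ) {k j : ℕ} (h : k < j) : Vn Λ k j = 0 := if_pos h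

lemma Vn_of_le (Λ : ℕ → ℂ) {k j : ℕ} (h : j ≤ k) :
    Vn Λ k j = ∑ m ∈ Finset.range (k - j + 1), (besselA j (k - j - m) : ℂ) * sigmaE Λ k m :=
  if_neg (not_lt.2 h)

lemma Vn_zero_base (Λ : ℕ → ℂ) (j : ℕ) : Vn Λ 0 j = if j = 0 then 1 else 0 := by
  match j with
  | 0 => simp [Vn, besselA_zero_right, sigmaE_zero]
  | j + 1 => simp [Vn]

lemma Vn_rec (Λ : ℕ → ℂ) (k j : ℕ) :
    Vn Λ (k+1) j = (Λ k + j) * Vn Λ k j + (if j = 0 then 0 else Vn Λ k (j-1)) := by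
  rcases lt_or_ge (k+1) j with h | h
  · rw [Vn_eq_zero Λ h, Vn_eq_zero Λ (by omega), Vn_eq_zero Λ (show k < j - 1 by omega)]
    simp [show j ≠ 0 by omega]
  match j with
  | 0 =>
    have hV : ∀ n : ℕ, Vn Λ n 0 = sigmaE Λ n n := by
      intro n
      rw [Vn_of_le Λ (Nat.zero_le n)]
      rw [Finset.sum_eq_single_of_mem n (by simp [Finset.mem_range])]
      · simp [besselA_zero_right]
      · intro m hm hmn
        rw [besselA_zero_left, if_neg (by simp at hm; omega)]
        simp
    rw [hV, hV, sigmaE_succ]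
    rw [sigmaE_eq_zero Λ (by omega)]
    push_cast
    ring
  | j' + 1 =>
    have hj' : j' ≤ k := by omega
    set n := k - j' with hn
    have hkn : k + 1 - (j'+1) = n := by omega
    rw [Vn_of_le Λ h, hkn, if_neg (Nat.succ_ne_zero j'), Nat.add_sub_cancel]
    push_cast
    have hsig : ∀ m : ℕ, sigmaE Λ (k+1) m
        = sigmaE Λ k m + Λ k * (if m = 0 then 0 else sigmaE Λ k (m-1)) := by
      intro m
      match m with
      | 0 => simp [sigmaE_zero]
      | m + 1 => simp [sigmaE_succ]
    have hA : ∀ t : ℕ, (besselA (j'+1) t : ℂ)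
        = (j'+1) * (if t = 0 then 0 else (besselA (j'+1) (t-1) : ℂ)) + besselA j' t := by
      intro t
      match t with
      | 0 => simp [besselA_zero_right]
      | t + 1 => rw [besselA_succ]; push_cast; simp
    have hH : ∑ m ∈ Finset.range n, (besselA (j'+1) (n-1-m) : ℂ) * sigmaE Λ k m
        = Vn Λ k (j'+1) := by
      match n, hn with
      | 0, hn =>
        rw [Vn_eq_zero Λ (show k < j'+1 by omega)]
        simp
      | n' + 1, hn =>
        rw [Vn_of_le Λ (show j'+1 ≤ k by omega)]
        have h1 : k - (j'+1) + 1 = n' + 1 := by omega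
        rw [h1]
        refine Finset.sum_congr rfl fun m hm => ?_
        rw [show k - (j'+1) - m = n' + 1 - 1 - m from by omega]
    have hG : ∑ m ∈ Finset.range (n+1),
        (if n - m = 0 then 0 else (besselA (j'+1) (n-m-1) : ℂ)) * sigmaE Λ k m
        = Vn Λ k (j'+1) := by
      rw [Finset.sum_range_succ, Nat.sub_self, if_pos rfl, zero_mul, add_zero, ← hH]
      refine Finset.sum_congr rfl fun m hm => ?_
      rw [if_neg (by simp at hm; omega), show n - m - 1 = n - 1 - m from by omega]
    have hG2 : ∑ m ∈ Finset.range (n+1), (besselA (j'+1) (n - m) : ℂ) *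
        (if m = 0 then 0 else sigmaE Λ k (m-1)) = Vn Λ k (j'+1) := by
      rw [Finset.sum_range_succ', if_pos rfl, mul_zero, add_zero, ← hH]
      refine Finset.sum_congr rfl fun m hm => ?_
      rw [if_neg (Nat.succ_ne_zero m), show n - (m+1) = n - 1 - m from by omega]
      simp
    have hF : ∑ m ∈ Finset.range (n+1), (besselA j' (n - m) : ℂ) * sigmaE Λ k m
        = Vn Λ k j' := by
      rw [Vn_of_le Λ hj']
    calc ∑ m ∈ Finset.range (n + 1), (besselA (j'+1) (n - m) : ℂ) * sigmaE Λ (k+1) m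
        = ∑ m ∈ Finset.range (n + 1),
            ((j'+1 : ℂ) * ((if n - m = 0 then 0 else (besselA (j'+1) (n-m-1) : ℂ))
                * sigmaE Λ k m)
              + (besselA j' (n - m) : ℂ) * sigmaE Λ k m
              + Λ k * ((besselA (j'+1) (n - m) : ℂ) *
                  (if m = 0 then 0 else sigmaE Λ k (m-1)))) := by
          refine Finset.sum_congr rfl fun m hm => ?_
          rw [hsig m, hA (n - m)]; ring
      _ = (j'+1 : ℂ) * Vn Λ k (j'+1) + Vn Λ k j' + Λ k * Vn Λ k (j'+1) := by
          rw [Finset.sum_add_distrib, Finset.sum_add_distrib, ← Finset.mul_sum,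
            ← Finset.mul_sum, hG, hG2, hF]
      _ = (Λ k + ((j' : ℂ) + 1)) * Vn Λ k (j'+1) + Vn Λ k j' := by ring

lemma Ucoef'_eq_zero (Λ : ℕ → ℂ) : ∀ k j : ℕ, k < j → Ucoef' Λ k j = 0 := by
  intro k
  induction k with
  | zero => intro j hj; match j, hj with | j+1, _ => rfl
  | succ k ih =>
    intro j hj
    match j, hj with
    | j+1, hj =>
      rw [Ucoef', ih (j+1) (by omega), ih j (by omega)]
      ring

lemma Ucoef_eq_zero (Λ : ℕ → ℂ) {k j : ℕ} (h : k < j) : Ucoef Λ k j = 0 :=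
  Ucoef'_eq_zero Λ (k+1) (j+1) (by omega)

lemma Ucoef_zero_base (Λ : ℕ → ℂ) (j : ℕ) : Ucoef Λ 0 j = if j = 0 then 1 else 0 := by
  match j with
  | 0 => simp [Ucoef, Ucoef']
  | j + 1 =>
    rw [Ucoef, Ucoef', Ucoef'_eq_zero Λ 0 (j+2) (by omega), Ucoef'_eq_zero Λ 0 (j+1) (by omega)]
    simp

lemma Ucoef_rec (Λ : ℕ → ℂ) (k j : ℕ) :
    Ucoef Λ (k+1) j = -(Λ j + k) * Ucoef Λ k j + (if j = 0 then 0 else Ucoef Λ k (j-1)) := by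
  rw [Ucoef, Ucoef', Ucoef]
  match j with
  | 0 =>
    have h0 : Ucoef' Λ (k+1) 0 = 0 := by rw [Ucoef']
    rw [h0]
    push_cast
    ring
  | j + 1 =>
    rw [if_neg (Nat.succ_ne_zero j)]
    rw [show j + 1 - 1 = j from rfl, Ucoef]
    push_cast
    ring

noncomputable def Ssum (Λ : ℕ → ℂ) (k j : ℕ) : ℂ :=
  ∑ l ∈ Finset.range (k+1), Ucoef Λ k l * Vn Λ l j

noncomputable def Tsum (Λ : ℕ → ℂ) (k j : ℕ) : ℂ :=
  ∑ l ∈ Finset.range (k+1), Vn Λ k l * Ucoef Λ l j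

lemma Ssum_rec (Λ : ℕ → ℂ) (k j : ℕ) :
    Ssum Λ (k+1) j = ((j : ℂ) - k) * Ssum Λ k j + (if j = 0 then 0 else Ssum Λ k (j-1)) := by
  have step1 : Ssum Λ (k+1) j
      = ∑ l ∈ Finset.range (k+2), (-(Λ l + k) * Ucoef Λ k l * Vn Λ l j
          + (if l = 0 then 0 else Ucoef Λ k (l-1)) * Vn Λ l j) := by
    refine Finset.sum_congr rfl fun l hl => ?_
    rw [Ucoef_rec]; ring
  rw [step1, Finset.sum_add_distrib]
  have h2 : ∑ l ∈ Finset.range (k+2), -(Λ l + k) * Ucoef Λ k l * Vn Λ l j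
      = ∑ l ∈ Finset.range (k+1), -(Λ l + k) * Ucoef Λ k l * Vn Λ l j := by
    rw [Finset.sum_range_succ, Ucoef_eq_zero Λ (by omega)]
    ring
  have h3 : ∑ l ∈ Finset.range (k+2), (if l = 0 then 0 else Ucoef Λ k (l-1)) * Vn Λ l j
      = ∑ l ∈ Finset.range (k+1), Ucoef Λ k l * Vn Λ (l+1) j := by
    rw [Finset.sum_range_succ']
    simp
  rw [h2, h3]
  have h4 : ∀ l, Ucoef Λ k l * Vn Λ (l+1) j
      = Ucoef Λ k l * ((Λ l + j) * Vn Λ l j) + Ucoef Λ k l *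
        (if j = 0 then 0 else Vn Λ l (j-1)) := by
    intro l; rw [Vn_rec]; ring
  have h5 : ∑ l ∈ Finset.range (k+1), (-(Λ l + k) * Ucoef Λ k l * Vn Λ l j
      + Ucoef Λ k l * ((Λ l + j) * Vn Λ l j))
      = ((j : ℂ) - k) * Ssum Λ k j := by
    rw [Ssum, Finset.mul_sum]
    refine Finset.sum_congr rfl fun l hl => ?_
    ring
  rw [Finset.sum_congr rfl fun l _ => h4 l, Finset.sum_add_distrib, ← add_assoc,
    ← Finset.sum_add_distrib, h5]
  congr 1
  by_cases hj : j = 0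
  · simp [hj]
  · simp only [if_neg hj, Ssum, Finset.mul_sum]

lemma Tsum_rec (Λ : ℕ → ℂ) (k j : ℕ) :
    Tsum Λ (k+1) j = (Λ k - Λ j) * Tsum Λ k j + (if j = 0 then 0 else Tsum Λ k (j-1)) := by
  have step1 : Tsum Λ (k+1) j
      = ∑ l ∈ Finset.range (k+2), ((Λ k + l) * Vn Λ k l * Ucoef Λ l j
          + (if l = 0 then 0 else Vn Λ k (l-1)) * Ucoef Λ l j) := by
    refine Finset.sum_congr rfl fun l hl => ?_
    rw [Vn_rec]; ring
  rw [step1, Finset.sum_add_distrib]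
  have h2 : ∑ l ∈ Finset.range (k+2), (Λ k + l) * Vn Λ k l * Ucoef Λ l j
      = ∑ l ∈ Finset.range (k+1), (Λ k + l) * Vn Λ k l * Ucoef Λ l j := by
    rw [Finset.sum_range_succ, Vn_eq_zero Λ (by omega)]
    ring
  have h3 : ∑ l ∈ Finset.range (k+2), (if l = 0 then 0 else Vn Λ k (l-1)) * Ucoef Λ l j
      = ∑ l ∈ Finset.range (k+1), Vn Λ k l * Ucoef Λ (l+1) j := by
    rw [Finset.sum_range_succ']
    simp
  rw [h2, h3]
  have h4 : ∀ l, Vn Λ k l * Ucoef Λ (l+1) j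
      = Vn Λ k l * (-(Λ j + l) * Ucoef Λ l j) + Vn Λ k l *
        (if j = 0 then 0 else Ucoef Λ l (j-1)) := by
    intro l; rw [Ucoef_rec]; ring
  have h5 : ∑ l ∈ Finset.range (k+1), ((Λ k + l) * Vn Λ k l * Ucoef Λ l j
      + Vn Λ k l * (-(Λ j + l) * Ucoef Λ l j))
      = (Λ k - Λ j) * Tsum Λ k j := by
    rw [Tsum, Finset.mul_sum]
    refine Finset.sum_congr rfl fun l hl => ?_
    ring
  rw [Finset.sum_congr rfl fun l _ => h4 l, Finset.sum_add_distrib, ← add_assoc,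
    ← Finset.sum_add_distrib, h5]
  congr 1
  by_cases hj : j = 0
  · simp [hj]
  · simp only [if_neg hj, Tsum, Finset.mul_sum]

lemma Ssum_eq (Λ : ℕ → ℂ) (k : ℕ) : ∀ j : ℕ, Ssum Λ k j = if k = j then 1 else 0 := by
  induction k with
  | zero =>
    intro j
    rw [Ssum]
    simp [Ucoef_zero_base, Vn_zero_base, eq_comm]
  | succ k ih =>
    intro j
    rw [Ssum_rec, ih j]
    match j with
    | 0 =>
      by_cases hk : k = 0 <;> simp [hk]
    | j + 1 =>
      rw [if_neg (Nat.succ_ne_zero j), Nat.add_sub_cancel, ih j]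
      by_cases h1 : k = j
      · subst h1
        simp
      · rw [if_neg h1]
        by_cases h2 : k = j + 1
        · subst h2
          simp
        · rw [if_neg h2, if_neg (by omega)]
          ring

lemma Tsum_eq (Λ : ℕ → ℂ) (k : ℕ) : ∀ j : ℕ, Tsum Λ k j = if k = j then 1 else 0 := by
  induction k with
  | zero =>
    intro j
    rw [Tsum]
    simp [Ucoef_zero_base, Vn_zero_base, eq_comm]
  | succ k ih =>
    intro j
    rw [Tsum_rec, ih j]
    match j with
    | 0 =>
      by_cases hk : k = 0 <;> simp [hk]
    | j + 1 =>
      rw [if_neg (Nat.succ_ne_zero j), Nat.add_sub_cancel, ih j]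
      by_cases h1 : k = j
      · subst h1
        simp
      · rw [if_neg h1]
        by_cases h2 : k = j + 1
        · subst h2
          simp
        · rw [if_neg h2, if_neg (by omega)]
          ring


/-- The matrices `(U(k,j))` and `(V(k,j))` are mutually inverse:
`∑_{l=j}^k U(k,l)·V(l,j) = δ_{k,j}` and `∑_{l=j}^k V(k,l)·U(l,j) = δ_{k,j}`. -/
theorem stmt_10 (Λ : ℕ → ℂ) (k j : ℕ) (hjk : j ≤ k) :
    (∑ l ∈ Finset.Icc j k, Ucoef Λ k l * Vcoef Λ l (j : ℤ)) =
      (if k = j then 1 else 0) ∧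
    (∑ l ∈ Finset.Icc j k, Vcoef Λ k (l : ℤ) * Ucoef Λ l j) =
      (if k = j then 1 else 0) := by
  have hsub : Finset.Icc j k ⊆ Finset.range (k+1) := by
    intro x hx
    simp only [Finset.mem_Icc] at hx
    simp only [Finset.mem_range]
    omega
  constructor
  · rw [← Ssum_eq Λ k j, Ssum]
    rw [Finset.sum_congr rfl fun l _ => by rw [Vcoef_natCast]]
    refine Finset.sum_subset hsub fun x hx hx' => ?_
    have hxj : x < j := by
      simp only [Finset.mem_range] at hx
      simp only [Finset.mem_Icc, not_and, not_le] at hx'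
      omega
    rw [Vn_eq_zero Λ hxj, mul_zero]
  · rw [← Tsum_eq Λ k j, Tsum]
    rw [Finset.sum_congr rfl fun l _ => by rw [Vcoef_natCast]]
    refine Finset.sum_subset hsub fun x hx hx' => ?_
    have hxj : x < j := by
      simp only [Finset.mem_range] at hx
      simp only [Finset.mem_Icc, not_and, not_le] at hx'
      omega
    rw [Ucoef_eq_zero Λ hxj, mul_zero]
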